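/- Let μ_1, μ_0 be the conditional distributions of X given S=1 and S=0, and suppose m_s := ∫ η(·,s) dμ_s > 0 for s ∈ {0,1}. Let η̂ : ℝ^d × {0,1} → [0,1] be measurable with m̂_s := ∫ η̂(·,s) dμ_s > 0, and let ν_1, ν_0 be probability measures on ℝ^d with ∫ η̂(·,s) dν_s > 0. Then for every classifier g, |ℙ(g(X,S)=1 | S=1,Y=1) − ℙ(g(X,S)=1 | S=0,Y=1)| ≤ Δ̂(g) + 2·∫|η(·,1) − η̂(·,1)| dμ_1 / m_1 + 2·∫|η(·,0) − η̂(·,0)| dμ_0 / m_0 + |∫ η̂(·,1)g(·,1) dμ_1 − ∫ η̂(·,1)g(·,1) dν_1| / m̂_1 + |∫ η̂(·,0)g(·,0) dμ_0 − ∫ η̂(·,0)g(·,0) dν_0| / m̂_0 + |∫ η̂(·,1) dν_1 − ∫ η̂(·,1) dμ_1| / m̂_1 + |∫ η̂(·,0) dν_0 − ∫ η̂(·,0) dμ_0| / m̂_0, where Δ̂(g) := |∫ η̂(·,1)g(·,1) dν_1 / ∫ η̂(·,1) dν_1 − ∫ η̂(·,0)g(·,0) dν_0 / ∫ η̂(·,0)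 dν_0|. -/

import Mathlib

open MeasureTheory ProbabilityTheory Set

lemma myIntegrable_of_bound {Ω : Type*} [MeasurableSpace Ω] (μ : Measure Ω) [IsFiniteMeasure μ]
    {f : Ω → ℝ} (hf : Measurable f) (C : ℝ) (h : ∀ ω, |f ω| ≤ C) : Integrable f μ :=
  (integrable_const C).mono' hf.aestronglyMeasurable (ae_of_all _ (by simpa using h))

lemma myIntegral_cond {Ω : Type*} [MeasurableSpace Ω] (P : Measure Ω) (s : Set Ω) (f : Ω → ℝ) :
    ∫ ω, f ω ∂(ProbabilityTheory.cond P s) = (P s)⁻¹.toReal * ∫ ω in s, f ω ∂P := by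
  rw [ProbabilityTheory.cond, integral_smul_measure, smul_eq_mul]

lemma alg_ratio {a m ah mh b n D : ℝ} (hm : 0 < m) (hmh : 0 < mh) (hn : 0 < n)
    (h1 : |a - ah| ≤ D) (h2 : |m - mh| ≤ D) (hah0 : 0 ≤ ah) (hahm : ah ≤ mh)
    (hb0 : 0 ≤ b) (hbn : b ≤ n) :
    |a/m - b/n| ≤ 2*D/m + |ah - b|/mh + |n - mh|/mh := by
  have key1 : |a/m - ah/mh| ≤ 2*D/m := by
    have e : a/m - ah/mh = (a-ah)/m + (ah/mh)*((mh-m)/m) := by field_simp; ring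
    have t1 : |(a-ah)/m| ≤ D/m := by
      rw [abs_div, abs_of_pos hm]; gcongr
    have t2 : |(ah/mh)*((mh-m)/m)| ≤ D/m := by
      rw [abs_mul, abs_div, abs_div, abs_of_pos hm, abs_of_pos hmh]
      have h3 : |ah|/mh ≤ 1 := by
        rw [div_le_one hmh, abs_of_nonneg hah0]; exact hahm
      have h4 : |mh - m| ≤ D := by rw [abs_sub_comm]; exact h2
      calc |ah|/mh * (|mh-m|/m) ≤ 1 * (D/m) := by
            apply mul_le_mul h3 (by gcongr) (by positivity) zero_le_one
        _ = D/m := one_mul _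
    calc |a/m - ah/mh| ≤ |(a-ah)/m| + |(ah/mh)*((mh-m)/m)| := e ▸ abs_add_le _ _
      _ ≤ D/m + D/m := add_le_add t1 t2
      _ = 2*D/m := by ring
  have key2 : |ah/mh - b/n| ≤ |ah - b|/mh + |n - mh|/mh := by
    have e : ah/mh - b/n = (ah-b)/mh + (b/n)*((n-mh)/mh) := by field_simp; ring
    have t1 : |(ah-b)/mh| = |ah-b|/mh := by rw [abs_div, abs_of_pos hmh]
    have t2 : |(b/n)*((n-mh)/mh)| ≤ |n-mh|/mh := by
      rw [abs_mul, abs_div, abs_div, abs_of_pos hn, abs_of_pos hmh]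
      have h3 : |b|/n ≤ 1 := by rw [div_le_one hn, abs_of_nonneg hb0]; exact hbn
      calc |b|/n * (|n-mh|/mh) ≤ 1 * (|n-mh|/mh) := by
            apply mul_le_mul_of_nonneg_right h3 (by positivity)
        _ = _ := one_mul _
    calc |ah/mh - b/n| ≤ |(ah-b)/mh| + |(b/n)*((n-mh)/mh)| := e ▸ abs_add_le _ _
      _ ≤ |ah-b|/mh + |n-mh|/mh := by rw [t1]; exact add_le_add le_rfl t2
  calc |a/m - b/n| ≤ |a/m - ah/mh| + |ah/mh - b/n| := abs_sub_le _ _ _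
    _ ≤ 2*D/m + (|ah - b|/mh + |n - mh|/mh) := add_le_add key1 key2
    _ = _ := by ring


lemma cond_prob_eq_ratio {d : ℕ} {Ω : Type*} [MeasurableSpace Ω]
    (P : Measure Ω) [IsProbabilityMeasure P]
    (X : Ω → (Fin d → ℝ)) (S Y : Ω → Bool)
    (hX : Measurable X) (hS : Measurable S) (hY : Measurable Y)
    (η : (Fin d → ℝ) → Bool → ℝ)
    (hreg : ∀ φ : (Fin d → ℝ) × Bool → ℝ, Measurable φ → (∃ C, ∀ z, |φ z| ≤ C) →
      ∫ ω, (if Y ω then (1:ℝ) else 0) * φ (X ω, S ω) ∂P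
        = ∫ ω, η (X ω) (S ω) * φ (X ω, S ω) ∂P)
    (g : (Fin d → ℝ) → Bool → Bool)
    (hg : Measurable (fun p : (Fin d → ℝ) × Bool => g p.1 p.2))
    (s : Bool) (hpos : 0 < P {ω | Y ω = true ∧ S ω = s}) :
    (ProbabilityTheory.cond P {ω | S ω = s ∧ Y ω = true}
        {ω | g (X ω) (S ω) = true}).toReal
      = (∫ ω, η (X ω) s * (if g (X ω) s then (1:ℝ) else 0)
            ∂(ProbabilityTheory.cond P {ω | S ω = s}))
        / (∫ ω, η (X ω) s ∂(ProbabilityTheory.cond P {ω | S ω = s})) := by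
  have hSm : MeasurableSet {ω | S ω = s} := hS (measurableSet_singleton s)
  have hYm : MeasurableSet {ω | Y ω = true} := hY (measurableSet_singleton true)
  have hAm : MeasurableSet {ω | S ω = s ∧ Y ω = true} := hSm.inter hYm
  have hGm : MeasurableSet {ω | g (X ω) (S ω) = true} :=
    (hg.comp (hX.prodMk hS)) (measurableSet_singleton true)
  -- φ for the denominator
  have hφ1 : Measurable (fun p : (Fin d → ℝ) × Bool => if p.2 = s then (1:ℝ) else 0) :=
    (Measurable.of_discrete (f := fun b : Bool => if b = s then (1:ℝ) else 0)).comp measurable_snd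
  have hφ2 : Measurable (fun p : (Fin d → ℝ) × Bool =>
      (if p.2 = s then (1:ℝ) else 0) * (if g p.1 p.2 then (1:ℝ) else 0)) := by
    exact hφ1.mul
      ((Measurable.of_discrete (f := fun b : Bool => if b then (1:ℝ) else 0)).comp hg)
  have hden := hreg (fun p => if p.2 = s then (1:ℝ) else 0) hφ1
    ⟨1, fun z => by split <;> simp⟩
  have hnum := hreg (fun p => (if p.2 = s then (1:ℝ) else 0) * (if g p.1 p.2 then (1:ℝ) else 0))
    hφ2 ⟨1, fun z => by split <;> split <;> simp⟩
  -- rewrite LHS of hden as measure of the set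
  have e1 : (fun ω => (if Y ω then (1:ℝ) else 0) * (if S ω = s then (1:ℝ) else 0))
      = Set.indicator {ω | S ω = s ∧ Y ω = true} (1 : Ω → ℝ) := by
    funext ω; by_cases hy : Y ω <;> by_cases hs' : S ω = s <;>
      simp [Set.indicator_apply, hy, hs']
  have e2 : (fun ω => η (X ω) (S ω) * (if S ω = s then (1:ℝ) else 0))
      = Set.indicator {ω | S ω = s} (fun ω => η (X ω) (S ω)) := by
    funext ω; by_cases hs' : S ω = s <;> simp [Set.indicator_apply, hs']
  have e3 : (fun ω => (if Y ω then (1:ℝ) else 0) *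
        ((if S ω = s then (1:ℝ) else 0) * (if g (X ω) (S ω) then (1:ℝ) else 0)))
      = Set.indicator ({ω | S ω = s ∧ Y ω = true} ∩ {ω | g (X ω) (S ω) = true})
          (1 : Ω → ℝ) := by
    funext ω; by_cases hy : Y ω <;> by_cases hs' : S ω = s <;>
      by_cases hgω : g (X ω) (S ω) <;> simp [Set.indicator_apply, hy, hs', hgω]
  have e4 : (fun ω => η (X ω) (S ω) *
        ((if S ω = s then (1:ℝ) else 0) * (if g (X ω) (S ω) then (1:ℝ) else 0)))
      = Set.indicator {ω | S ω = s}
          (fun ω => η (X ω) s * (if g (X ω) s then (1:ℝ) else 0)) := by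
    funext ω; by_cases hs' : S ω = s <;>
      simp [Set.indicator_apply, hs']
  have hden' : (P {ω | S ω = s ∧ Y ω = true}).toReal
      = ∫ ω in {ω | S ω = s}, η (X ω) s ∂P := by
    rw [← measureReal_def, ← integral_indicator_one hAm, ← e1, hden, e2, integral_indicator hSm]
    exact setIntegral_congr_fun hSm (fun ω hω => by simp [Set.mem_setOf_eq.mp hω])
  have hnum' : (P ({ω | S ω = s ∧ Y ω = true} ∩ {ω | g (X ω) (S ω) = true})).toReal
      = ∫ ω in {ω | S ω = s}, η (X ω) s * (if g (X ω) s then (1:ℝ) else 0) ∂P := by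
    rw [← measureReal_def, ← integral_indicator_one (hAm.inter hGm), ← e3, hnum, e4, integral_indicator hSm]
  -- express cond probability
  have hc := ProbabilityTheory.cond_apply hAm P {ω | g (X ω) (S ω) = true}
  have hAfin : P {ω | S ω = s ∧ Y ω = true} ≠ ⊤ := measure_ne_top P _
  rw [hc, ENNReal.toReal_mul, ENNReal.toReal_inv]
  rw [myIntegral_cond, myIntegral_cond]
  have hcpos : (0:ℝ) < (P {ω | S ω = s})⁻¹.toReal := by
    rw [ENNReal.toReal_inv]
    have h1 : P {ω | Y ω = true ∧ S ω = s} ≤ P {ω | S ω = s} :=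
      measure_mono (fun ω h => h.2)
    have : (0:ℝ) < (P {ω | S ω = s}).toReal :=
      ENNReal.toReal_pos (lt_of_lt_of_le hpos h1).ne' (measure_ne_top P _)
    positivity
  rw [mul_div_mul_left _ _ hcpos.ne', hden', hnum', inv_mul_eq_div]

lemma group_bound {d : ℕ} {Ω : Type*} [MeasurableSpace Ω]
    (μ : Measure Ω) [IsProbabilityMeasure μ]
    (ν : Measure (Fin d → ℝ)) [IsProbabilityMeasure ν]
    (X : Ω → (Fin d → ℝ)) (hX : Measurable X)
    (η ηh : (Fin d → ℝ) → Bool → ℝ)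
    (hηm : Measurable (fun p : (Fin d → ℝ) × Bool => η p.1 p.2))
    (hη01 : ∀ x s, η x s ∈ Icc (0:ℝ) 1)
    (hηhm : Measurable (fun p : (Fin d → ℝ) × Bool => ηh p.1 p.2))
    (hηh01 : ∀ x s, ηh x s ∈ Icc (0:ℝ) 1)
    (g : (Fin d → ℝ) → Bool → Bool)
    (hg : Measurable (fun p : (Fin d → ℝ) × Bool => g p.1 p.2))
    (s : Bool) (m mh : ℝ)
    (hm : m = ∫ ω, η (X ω) s ∂μ) (hmpos : 0 < m)
    (hmh : mh = ∫ ω, ηh (X ω) s ∂μ) (hmhpos : 0 < mh)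
    (hn : 0 < ∫ x, ηh x s ∂ν) :
    |(∫ ω, η (X ω) s * (if g (X ω) s then (1:ℝ) else 0) ∂μ) / m
        - (∫ x, ηh x s * (if g x s then (1:ℝ) else 0) ∂ν) / (∫ x, ηh x s ∂ν)|
      ≤ 2 * (∫ ω, |η (X ω) s - ηh (X ω) s| ∂μ) / m
        + |(∫ ω, ηh (X ω) s * (if g (X ω) s then (1:ℝ) else 0) ∂μ)
            - (∫ x, ηh x s * (if g x s then (1:ℝ) else 0) ∂ν)| / mh
        + |(∫ x, ηh x s ∂ν) - (∫ ω, ηh (X ω) s ∂μ)| / mh := by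
  subst hm; subst hmh
  -- measurability
  have hgix : Measurable (fun x => if g x s then (1:ℝ) else 0) :=
    (Measurable.of_discrete (f := fun b : Bool => if b then (1:ℝ) else 0)).comp
      (hg.comp (measurable_id.prodMk measurable_const))
  have hηx : Measurable (fun x => η x s) := hηm.comp (measurable_id.prodMk measurable_const)
  have hηhx : Measurable (fun x => ηh x s) := hηhm.comp (measurable_id.prodMk measurable_const)
  have habs : ∀ x, |η x s| ≤ 1 := fun x => abs_le.2 ⟨by linarith [(hη01 x s).1], (hη01 x s).2⟩
  have habsh : ∀ x, |ηh x s| ≤ 1 := fun x => abs_le.2 ⟨by linarith [(hηh01 x s).1], (hηh01 x s).2⟩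
  have hgi01 : ∀ x, (0:ℝ) ≤ (if g x s then (1:ℝ) else 0) ∧ (if g x s then (1:ℝ) else 0) ≤ 1 := by
    intro x; split <;> norm_num
  have hbndmul : ∀ (f : (Fin d → ℝ) → ℝ), (∀ x, |f x| ≤ 1) →
      ∀ x, |f x * (if g x s then (1:ℝ) else 0)| ≤ 1 := by
    intro f hf x
    rw [abs_mul]
    calc |f x| * |if g x s then (1:ℝ) else 0| ≤ 1 * 1 := by
          apply mul_le_mul (hf x) _ (abs_nonneg _) zero_le_one
          rw [abs_of_nonneg (hgi01 x).1]; exact (hgi01 x).2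
      _ = 1 := one_mul 1
  -- integrabilities on μ
  have I1 : Integrable (fun ω => η (X ω) s * (if g (X ω) s then (1:ℝ) else 0)) μ :=
    myIntegrable_of_bound μ ((hηx.comp hX).mul (hgix.comp hX)) 1
      (fun ω => hbndmul _ habs (X ω))
  have I2 : Integrable (fun ω => ηh (X ω) s * (if g (X ω) s then (1:ℝ) else 0)) μ :=
    myIntegrable_of_bound μ ((hηhx.comp hX).mul (hgix.comp hX)) 1
      (fun ω => hbndmul _ habsh (X ω))
  have I3 : Integrable (fun ω => η (X ω) s) μ :=
    myIntegrable_of_bound μ (hηx.comp hX) 1 (fun ω => habs (X ω))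
  have I4 : Integrable (fun ω => ηh (X ω) s) μ :=
    myIntegrable_of_bound μ (hηhx.comp hX) 1 (fun ω => habsh (X ω))
  have I5 : Integrable (fun ω => |η (X ω) s - ηh (X ω) s|) μ := (I3.sub I4).abs
  have J1 : Integrable (fun x => ηh x s * (if g x s then (1:ℝ) else 0)) ν :=
    myIntegrable_of_bound ν (hηhx.mul hgix) 1 (fun x => hbndmul _ habsh x)
  have J2 : Integrable (fun x => ηh x s) ν :=
    myIntegrable_of_bound ν hηhx 1 habsh
  set D := ∫ ω, |η (X ω) s - ηh (X ω) s| ∂μ with hD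
  -- (i)
  have h1 : |(∫ ω, η (X ω) s * (if g (X ω) s then (1:ℝ) else 0) ∂μ)
      - ∫ ω, ηh (X ω) s * (if g (X ω) s then (1:ℝ) else 0) ∂μ| ≤ D := by
    rw [← integral_sub I1 I2]
    calc |∫ ω, (η (X ω) s * (if g (X ω) s then (1:ℝ) else 0)
            - ηh (X ω) s * (if g (X ω) s then (1:ℝ) else 0)) ∂μ|
        ≤ ∫ ω, |η (X ω) s * (if g (X ω) s then (1:ℝ) else 0)
            - ηh (X ω) s * (if g (X ω) s then (1:ℝ) else 0)| ∂μ :=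
          by simpa [Real.norm_eq_abs] using
            norm_integral_le_integral_norm (μ := μ) (fun ω => η (X ω) s * (if g (X ω) s then (1:ℝ) else 0)
              - ηh (X ω) s * (if g (X ω) s then (1:ℝ) else 0))
      _ ≤ D := by
          apply integral_mono (I1.sub I2).abs I5
          intro ω
          by_cases h : g (X ω) s <;> simp [h]
  -- (ii)
  have h2 : |(∫ ω, η (X ω) s ∂μ) - ∫ ω, ηh (X ω) s ∂μ| ≤ D := by
    rw [← integral_sub I3 I4]
    simpa [Real.norm_eq_abs, hD] using
      norm_integral_le_integral_norm (μ := μ) (fun ω => η (X ω) s - ηh (X ω) s)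
  -- (iii)
  have h3 : 0 ≤ ∫ ω, ηh (X ω) s * (if g (X ω) s then (1:ℝ) else 0) ∂μ :=
    integral_nonneg (fun ω => mul_nonneg (hηh01 _ _).1 (hgi01 _).1)
  have h4 : (∫ ω, ηh (X ω) s * (if g (X ω) s then (1:ℝ) else 0) ∂μ) ≤ ∫ ω, ηh (X ω) s ∂μ := by
    apply integral_mono I2 I4
    intro ω
    calc ηh (X ω) s * (if g (X ω) s then (1:ℝ) else 0) ≤ ηh (X ω) s * 1 :=
          mul_le_mul_of_nonneg_left (hgi01 _).2 (hηh01 _ _).1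
      _ = ηh (X ω) s := mul_one _
  -- (iv)
  have h5 : 0 ≤ ∫ x, ηh x s * (if g x s then (1:ℝ) else 0) ∂ν :=
    integral_nonneg (fun x => mul_nonneg (hηh01 _ _).1 (hgi01 _).1)
  have h6 : (∫ x, ηh x s * (if g x s then (1:ℝ) else 0) ∂ν) ≤ ∫ x, ηh x s ∂ν := by
    apply integral_mono J1 J2
    intro x
    calc ηh x s * (if g x s then (1:ℝ) else 0) ≤ ηh x s * 1 :=
          mul_le_mul_of_nonneg_left (hgi01 _).2 (hηh01 _ _).1
      _ = ηh x s := mul_one _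
  have := alg_ratio (a := ∫ ω, η (X ω) s * (if g (X ω) s then (1:ℝ) else 0) ∂μ)
    (ah := ∫ ω, ηh (X ω) s * (if g (X ω) s then (1:ℝ) else 0) ∂μ)
    (b := ∫ x, ηh x s * (if g x s then (1:ℝ) else 0) ∂ν)
    (n := ∫ x, ηh x s ∂ν) (D := D)
    hmpos hmhpos hn h1 h2 h3 h4 h5 h6
  exact this

theorem stmt_6 {d : ℕ} {Ω : Type*} [MeasurableSpace Ω]
    (P : Measure Ω) [IsProbabilityMeasure P]
    (X : Ω → (Fin d → ℝ)) (S Y : Ω → Bool)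
    (hX : Measurable X) (hS : Measurable S) (hY : Measurable Y)
    (hSnd : 0 < P {ω | S ω = true} ∧ P {ω | S ω = true} < 1)
    (hYS : ∀ s : Bool, 0 < P {ω | Y ω = true ∧ S ω = s})
    (η : (Fin d → ℝ) → Bool → ℝ)
    (hηm : Measurable (fun p : (Fin d → ℝ) × Bool => η p.1 p.2))
    (hη01 : ∀ x s, η x s ∈ Icc (0:ℝ) 1)
    (hreg : ∀ φ : (Fin d → ℝ) × Bool → ℝ, Measurable φ → (∃ C, ∀ z, |φ z| ≤ C) →
      ∫ ω, (if Y ω then (1:ℝ) else 0) * φ (X ω, S ω) ∂P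
        = ∫ ω, η (X ω) (S ω) * φ (X ω, S ω) ∂P)
    -- conditional means of the true regression function
    (m1 m0 : ℝ)
    (hm1 : m1 = ∫ ω, η (X ω) true ∂(ProbabilityTheory.cond P {ω | S ω = true}))
    (hm0 : m0 = ∫ ω, η (X ω) false ∂(ProbabilityTheory.cond P {ω | S ω = false}))
    (hm1pos : 0 < m1) (hm0pos : 0 < m0)
    -- the estimator
    (ηh : (Fin d → ℝ) → Bool → ℝ)
    (hηhm : Measurable (fun p : (Fin d → ℝ) × Bool => ηh p.1 p.2))
    (hηh01 : ∀ x s, ηh x s ∈ Icc (0:ℝ) 1)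
    (mh1 mh0 : ℝ)
    (hmh1 : mh1 = ∫ ω, ηh (X ω) true ∂(ProbabilityTheory.cond P {ω | S ω = true}))
    (hmh0 : mh0 = ∫ ω, ηh (X ω) false ∂(ProbabilityTheory.cond P {ω | S ω = false}))
    (hmh1pos : 0 < mh1) (hmh0pos : 0 < mh0)
    -- the auxiliary (empirical) measures
    (ν1 ν0 : Measure (Fin d → ℝ))
    [IsProbabilityMeasure ν1] [IsProbabilityMeasure ν0]
    (hν1pos : 0 < ∫ x, ηh x true ∂ν1) (hν0pos : 0 < ∫ x, ηh x false ∂ν0)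
    -- the classifier
    (g : (Fin d → ℝ) → Bool → Bool)
    (hg : Measurable (fun p : (Fin d → ℝ) × Bool => g p.1 p.2)) :
    |(ProbabilityTheory.cond P {ω | S ω = true ∧ Y ω = true}
        {ω | g (X ω) (S ω) = true}).toReal
      - (ProbabilityTheory.cond P {ω | S ω = false ∧ Y ω = true}
          {ω | g (X ω) (S ω) = true}).toReal|
      ≤ |(∫ x, ηh x true * (if g x true then (1:ℝ) else 0) ∂ν1) / (∫ x, ηh x true ∂ν1)
          - (∫ x, ηh x false * (if g x false then (1:ℝ) else 0) ∂ν0)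
              / (∫ x, ηh x false ∂ν0)|
        + 2 * (∫ ω, |η (X ω) true - ηh (X ω) true|
            ∂(ProbabilityTheory.cond P {ω | S ω = true})) / m1
        + 2 * (∫ ω, |η (X ω) false - ηh (X ω) false|
            ∂(ProbabilityTheory.cond P {ω | S ω = false})) / m0
        + |(∫ ω, ηh (X ω) true * (if g (X ω) true then (1:ℝ) else 0)
              ∂(ProbabilityTheory.cond P {ω | S ω = true}))
            - (∫ x, ηh x true * (if g x true then (1:ℝ) else 0) ∂ν1)| / mh1
        + |(∫ ω, ηh (X ω) false * (if g (X ω) false then (1:ℝ) else 0)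
              ∂(ProbabilityTheory.cond P {ω | S ω = false}))
            - (∫ x, ηh x false * (if g x false then (1:ℝ) else 0) ∂ν0)| / mh0
        + |(∫ x, ηh x true ∂ν1)
            - (∫ ω, ηh (X ω) true ∂(ProbabilityTheory.cond P {ω | S ω = true}))| / mh1
        + |(∫ x, ηh x false ∂ν0)
            - (∫ ω, ηh (X ω) false ∂(ProbabilityTheory.cond P {ω | S ω = false}))| / mh0 := by
  have hP : ∀ s : Bool, P {ω | S ω = s} ≠ 0 := by
    intro s
    have h1 : P {ω | Y ω = true ∧ S ω = s} ≤ P {ω | S ω = s} :=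
      measure_mono (fun ω h => h.2)
    exact (lt_of_lt_of_le (hYS s) h1).ne'
  haveI i1 : IsProbabilityMeasure (ProbabilityTheory.cond P {ω | S ω = true}) :=
    cond_isProbabilityMeasure (hP true)
  haveI i0 : IsProbabilityMeasure (ProbabilityTheory.cond P {ω | S ω = false}) :=
    cond_isProbabilityMeasure (hP false)
  rw [cond_prob_eq_ratio P X S Y hX hS hY η hreg g hg true (hYS true),
      cond_prob_eq_ratio P X S Y hX hS hY η hreg g hg false (hYS false),
      ← hm1, ← hm0]
  have G1 := group_bound (ProbabilityTheory.cond P {ω | S ω = true}) ν1 X hX η ηh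
    hηm hη01 hηhm hηh01 g hg true m1 mh1 hm1 hm1pos hmh1 hmh1pos hν1pos
  have G0 := group_bound (ProbabilityTheory.cond P {ω | S ω = false}) ν0 X hX η ηh
    hηm hη01 hηhm hηh01 g hg false m0 mh0 hm0 hm0pos hmh0 hmh0pos hν0pos
  set p1 := (∫ ω, η (X ω) true * (if g (X ω) true then (1:ℝ) else 0)
      ∂(ProbabilityTheory.cond P {ω | S ω = true})) / m1 with hp1
  set p0 := (∫ ω, η (X ω) false * (if g (X ω) false then (1:ℝ) else 0)
      ∂(ProbabilityTheory.cond P {ω | S ω = false})) / m0 with hp0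
  set q1 := (∫ x, ηh x true * (if g x true then (1:ℝ) else 0) ∂ν1) / (∫ x, ηh x true ∂ν1)
    with hq1
  set q0 := (∫ x, ηh x false * (if g x false then (1:ℝ) else 0) ∂ν0) / (∫ x, ηh x false ∂ν0)
    with hq0
  have t1 : |p1 - p0| ≤ |p1 - q1| + |q1 - p0| := abs_sub_le _ _ _
  have t2 : |q1 - p0| ≤ |q1 - q0| + |q0 - p0| := abs_sub_le _ _ _
  have t3 : |q0 - p0| = |p0 - q0| := abs_sub_comm _ _
  linarith [G1, G0, t1, t2, t3.le, t3.ge]
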